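/- Let p be a holomorphic polynomial, let a, b ∈ ℂ, and let n be a nonnegative integer. Then (1/π)·∫_ℂ p(w)·conj(w)^n·e^{a·w + b·conj(w) − |w|^2} dA(w) equals the n-th derivative of the entire function u ↦ e^{a·u}·p(u), evaluated at u = b. -/

import Mathlib

open Complex MeasureTheory
open scoped ComplexConjugate

noncomputable section Stmt10Aux

namespace Stmt10

variable (a b : ℂ)

/-- The basic integrand family. -/
def fn (m n : ℕ) : ℂ → ℂ := fun w =>
  w ^ m * (conj w) ^ n * Complex.exp (a * w + b * conj w - w * conj w)

lemma fn_cont (m n : ℕ) : Continuous (fn a b m n) := by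
  unfold fn
  have hconj : Continuous fun w : ℂ => (starRingEnd ℂ) w := continuous_conj
  fun_prop

lemma fn_bound (m n : ℕ) : ∃ K : ℝ, ∀ w : ℂ,
    ‖fn a b m n w‖ ≤ K * Real.exp (-(‖w‖ ^ 2) / 2) := by
  obtain ⟨c, hc⟩ : ∃ c : ℝ, c = ‖a‖ + ‖b‖ := ⟨_, rfl⟩
  refine ⟨(m + n).factorial * Real.exp ((c + 1) ^ 2 / 2), fun w => ?_⟩
  obtain ⟨r, hr⟩ : ∃ r : ℝ, r = ‖w‖ := ⟨_, rfl⟩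
  have hr0 : 0 ≤ r := hr ▸ norm_nonneg _
  have hnorm : ‖fn a b m n w‖ =
      r ^ (m + n) * Real.exp ((a * w + b * conj w - w * conj w).re) := by
    simp only [fn, norm_mul, norm_pow, Complex.norm_conj,
      Complex.norm_exp, hr, pow_add]
  have hre : (a * w + b * conj w - w * conj w).re ≤ c * r - r ^ 2 := by
    have h1 : (a * w).re ≤ ‖a‖ * r := by
      calc (a * w).re ≤ ‖a * w‖ := Complex.re_le_norm _
        _ = ‖a‖ * r := by rw [norm_mul, hr]
    have h2 : (b * conj w).re ≤ ‖b‖ * r := by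
      calc (b * conj w).re ≤ ‖b * conj w‖ := Complex.re_le_norm _
        _ = ‖b‖ * r := by rw [norm_mul, Complex.norm_conj, hr]
    have h3 : (w * conj w).re = r ^ 2 := by
      rw [Complex.mul_conj, Complex.ofReal_re, Complex.normSq_eq_norm_sq, hr]
    simp only [Complex.sub_re, Complex.add_re, h3, hc]
    linarith
  have hpow : r ^ (m + n) ≤ (m + n).factorial * Real.exp r := by
    have h := Real.pow_div_factorial_le_exp r hr0 (m + n)
    have hf : (0:ℝ) < (m + n).factorial := by positivity
    rw [div_le_iff₀ hf] at h
    linarith [h]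
  rw [← hr]
  calc ‖fn a b m n w‖ = r ^ (m + n) * Real.exp ((a * w + b * conj w - w * conj w).re) := hnorm
    _ ≤ ((m + n).factorial * Real.exp r) * Real.exp (c * r - r ^ 2) := by
        apply mul_le_mul hpow (Real.exp_le_exp.2 hre) (Real.exp_pos _).le
        positivity
    _ = (m + n).factorial * Real.exp ((c + 1) * r - r ^ 2 / 2) * Real.exp (-(r ^ 2) / 2) := by
        rw [mul_assoc, mul_assoc, ← Real.exp_add, ← Real.exp_add]
        congr 1
        ring
    _ ≤ (m + n).factorial * Real.exp ((c + 1) ^ 2 / 2) * Real.exp (-(r ^ 2) / 2) := by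
        have hle : (c + 1) * r - r ^ 2 / 2 ≤ (c + 1) ^ 2 / 2 := by
          nlinarith [sq_nonneg (c + 1 - r)]
        have h := Real.exp_le_exp.2 hle
        have hf : (0:ℝ) ≤ (m + n).factorial := by positivity
        exact mul_le_mul_of_nonneg_right (mul_le_mul_of_nonneg_left h hf) (Real.exp_pos _).le

lemma integrable_gauss : Integrable (fun w : ℂ => Real.exp (-(‖w‖ ^ 2) / 2)) := by
  have hemb := Complex.measurableEquivRealProd.symm.measurableEmbedding
  have hmp := Complex.volume_preserving_equiv_real_prod.symm Complex.measurableEquivRealProd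
  rw [← hmp.integrable_comp_emb hemb]
  have h1 : Integrable (fun x : ℝ => Real.exp (-(1/2 : ℝ) * x ^ 2)) :=
    integrable_exp_neg_mul_sq (by norm_num)
  have := h1.mul_prod h1
  refine this.congr ?_
  filter_upwards with p
  simp only [Function.comp, Complex.measurableEquivRealProd_symm_apply]
  rw [← Real.exp_add]
  congr 1
  have : ‖Complex.mk p.1 p.2‖ ^ 2 = p.1 ^ 2 + p.2 ^ 2 := by
    rw [Complex.sq_norm, Complex.normSq_mk]; ring
  rw [this]; ring

lemma fn_integrable (m n : ℕ) : Integrable (fn a b m n) := by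
  obtain ⟨K, hK⟩ := fn_bound a b m n
  exact ((integrable_gauss.const_mul K).mono'
    (fn_cont a b m n).aestronglyMeasurable
    (Filter.Eventually.of_forall fun w => (hK w)))

lemma fn_slice_x (m n : ℕ) (y : ℝ) :
    Integrable (fun x : ℝ => fn a b m n (x + y * I)) := by
  obtain ⟨K, hK⟩ := fn_bound a b m n
  have h1 : Integrable (fun x : ℝ => K * Real.exp (-(1/2 : ℝ) * x ^ 2)) :=
    (integrable_exp_neg_mul_sq (by norm_num)).const_mul K
  refine h1.mono' ?_ ?_
  · exact ((fn_cont a b m n).comp (by continuity)).aestronglyMeasurable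
  · filter_upwards with x
    have hb := hK (x + y * I)
    have hx2 : x ^ 2 ≤ ‖(x:ℂ) + y * I‖ ^ 2 := by
      rw [Complex.sq_norm, ← Complex.mk_eq_add_mul_I, Complex.normSq_mk]
      nlinarith
    have hK0 : 0 ≤ K := by
      have := hK 0; have h2 := norm_nonneg (fn a b m n 0)
      nlinarith [Real.exp_pos (-(‖(0:ℂ)‖ ^ 2) / 2)]
    calc ‖fn a b m n (↑x + ↑y * I)‖ ≤ K * Real.exp (-(‖(x:ℂ) + y * I‖ ^ 2) / 2) := hb
      _ ≤ K * Real.exp (-(1/2 : ℝ) * x ^ 2) := by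
          apply mul_le_mul_of_nonneg_left (Real.exp_le_exp.2 (by nlinarith)) hK0

lemma fn_slice_y (m n : ℕ) (x : ℝ) :
    Integrable (fun y : ℝ => fn a b m n (x + y * I)) := by
  obtain ⟨K, hK⟩ := fn_bound a b m n
  have h1 : Integrable (fun y : ℝ => K * Real.exp (-(1/2 : ℝ) * y ^ 2)) :=
    (integrable_exp_neg_mul_sq (by norm_num)).const_mul K
  refine h1.mono' ?_ ?_
  · exact ((fn_cont a b m n).comp (by continuity)).aestronglyMeasurable
  · filter_upwards with y
    have hb := hK (x + y * I)
    have hx2 : y ^ 2 ≤ ‖(x:ℂ) + y * I‖ ^ 2 := by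
      rw [Complex.sq_norm, ← Complex.mk_eq_add_mul_I, Complex.normSq_mk]
      nlinarith
    have hK0 : 0 ≤ K := by
      have := hK 0; have h2 := norm_nonneg (fn a b m n 0)
      nlinarith [Real.exp_pos (-(‖(0:ℂ)‖ ^ 2) / 2)]
    calc ‖fn a b m n (↑x + ↑y * I)‖ ≤ K * Real.exp (-(‖(x:ℂ) + y * I‖ ^ 2) / 2) := hb
      _ ≤ K * Real.exp (-(1/2 : ℝ) * y ^ 2) := by
          apply mul_le_mul_of_nonneg_left (Real.exp_le_exp.2 (by nlinarith)) hK0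

lemma integral_complex_eq (g : ℂ → ℂ) :
    ∫ w : ℂ, g w = ∫ p : ℝ × ℝ, g (p.1 + p.2 * I) := by
  have hemb := Complex.measurableEquivRealProd.symm.measurableEmbedding
  have hmp := Complex.volume_preserving_equiv_real_prod.symm Complex.measurableEquivRealProd
  rw [← hmp.integral_comp hemb g]
  congr 1
  ext p
  simp [Complex.measurableEquivRealProd_symm_apply, Complex.mk_eq_add_mul_I]

lemma integrable_prod_of (g : ℂ → ℂ) (h : Integrable g) :
    Integrable (fun p : ℝ × ℝ => g (p.1 + p.2 * I)) := by
  have hemb := Complex.measurableEquivRealProd.symm.measurableEmbedding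
  have hmp := Complex.volume_preserving_equiv_real_prod.symm Complex.measurableEquivRealProd
  have := (hmp.integrable_comp_emb hemb).2 h
  refine this.congr ?_
  filter_upwards with p
  simp [Function.comp, Complex.measurableEquivRealProd_symm_apply, Complex.mk_eq_add_mul_I]


/-- Generic derivative computation for the integrand shape. -/
lemma hasDerivAt_core (m n : ℕ) {u v : ℂ → ℂ} {du dv z : ℂ}
    (hu : HasDerivAt u du z) (hv : HasDerivAt v dv z) :
    HasDerivAt (fun z => u z ^ m * v z ^ n * Complex.exp (a * u z + b * v z - u z * v z))
      ((↑m * u z ^ (m - 1) * du * v z ^ n + ↑n * v z ^ (n - 1) * dv * u z ^ m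
          + u z ^ m * v z ^ n * (a * du + b * dv - (du * v z + u z * dv)))
        * Complex.exp (a * u z + b * v z - u z * v z)) z := by
  have h1 : HasDerivAt (fun z => u z ^ m) (↑m * u z ^ (m - 1) * du) z := hu.pow m
  have h2 : HasDerivAt (fun z => v z ^ n) (↑n * v z ^ (n - 1) * dv) z := hv.pow n
  have h3 : HasDerivAt (fun z => a * u z + b * v z - u z * v z)
      (a * du + b * dv - (du * v z + u z * dv)) z := by
    exact ((hu.const_mul a).add (hv.const_mul b)).sub (hu.mul hv)
  have h4 := h3.cexp
  have := (h1.fun_mul h2).fun_mul h4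
  exact this.congr_deriv (by ring)

/-- The `x`-direction derivative of `fn`, as a global function. -/
def fnx (m n : ℕ) : ℂ → ℂ := fun w =>
  (↑m * w ^ (m - 1) * 1 * (conj w) ^ n + ↑n * (conj w) ^ (n - 1) * 1 * w ^ m
      + w ^ m * (conj w) ^ n * (a * 1 + b * 1 - (1 * conj w + w * 1)))
    * Complex.exp (a * w + b * conj w - w * conj w)

/-- The `y`-direction derivative of `fn`, as a global function. -/
def fny (m n : ℕ) : ℂ → ℂ := fun w =>
  (↑m * w ^ (m - 1) * I * (conj w) ^ n + ↑n * (conj w) ^ (n - 1) * (-I) * w ^ m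
      + w ^ m * (conj w) ^ n * (a * I + b * (-I) - (I * conj w + w * (-I))))
    * Complex.exp (a * w + b * conj w - w * conj w)

lemma conj_add_mul_I (x y : ℝ) : conj ((x : ℂ) + y * I) = (x : ℂ) - y * I := by
  simp [map_add, map_mul, Complex.conj_ofReal, Complex.conj_I]
  ring

lemma fnx_eq (m n : ℕ) : fnx a b m n = fun w =>
    ↑m * fn a b (m - 1) n w + ↑n * fn a b m (n - 1) w + (a + b) * fn a b m n w
      - fn a b m (n + 1) w - fn a b (m + 1) n w := by
  funext w
  simp only [fnx, fn]
  ring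

lemma fny_eq (m n : ℕ) : fny a b m n = fun w =>
    I * (↑m * fn a b (m - 1) n w - ↑n * fn a b m (n - 1) w + (a - b) * fn a b m n w
      - fn a b m (n + 1) w + fn a b (m + 1) n w) := by
  funext w
  simp only [fny, fn]
  ring

lemma hasDerivAt_fn_x (m n : ℕ) (y x : ℝ) :
    HasDerivAt (fun t : ℝ => fn a b m n (t + y * I)) (fnx a b m n (x + y * I)) x := by
  have hu : HasDerivAt (fun z : ℂ => z + (y : ℂ) * I) 1 (x : ℂ) :=
    (hasDerivAt_id _).add_const _
  have hv : HasDerivAt (fun z : ℂ => z - (y : ℂ) * I) 1 (x : ℂ) :=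
    (hasDerivAt_id _).sub_const _
  have h := ((hasDerivAt_core a b m n hu hv).comp_ofReal)
  have hfun : (fun t : ℝ => ((t : ℂ) + y * I) ^ m * ((t : ℂ) - y * I) ^ n *
      Complex.exp (a * ((t : ℂ) + y * I) + b * ((t : ℂ) - y * I)
        - ((t : ℂ) + y * I) * ((t : ℂ) - y * I)))
      = fun t : ℝ => fn a b m n (t + y * I) := by
    funext t
    rw [fn, conj_add_mul_I]
  rw [hfun] at h
  convert h using 1
  rw [fnx, conj_add_mul_I]

lemma hasDerivAt_fn_y (m n : ℕ) (x y : ℝ) :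
    HasDerivAt (fun t : ℝ => fn a b m n (x + t * I)) (fny a b m n (x + y * I)) y := by
  have hu : HasDerivAt (fun z : ℂ => (x : ℂ) + z * I) I (y : ℂ) := by
    simpa using ((hasDerivAt_id ((y:ℝ) : ℂ)).mul_const I).const_add (x : ℂ)
  have hv : HasDerivAt (fun z : ℂ => (x : ℂ) - z * I) (-I) (y : ℂ) := by
    simpa using ((hasDerivAt_id ((y:ℝ) : ℂ)).mul_const I).const_sub (x : ℂ)
  have h := ((hasDerivAt_core a b m n hu hv).comp_ofReal)
  have hfun : (fun t : ℝ => ((x : ℂ) + t * I) ^ m * ((x : ℂ) - t * I) ^ n *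
      Complex.exp (a * ((x : ℂ) + t * I) + b * ((x : ℂ) - t * I)
        - ((x : ℂ) + t * I) * ((x : ℂ) - t * I)))
      = fun t : ℝ => fn a b m n (x + t * I) := by
    funext t
    rw [fn, conj_add_mul_I]
  rw [hfun] at h
  convert h using 1
  rw [fny, conj_add_mul_I]


lemma fnx_integrable (m n : ℕ) : Integrable (fnx a b m n) := by
  rw [fnx_eq]
  exact (((((fn_integrable a b (m-1) n).const_mul _).add
    ((fn_integrable a b m (n-1)).const_mul _)).add
    ((fn_integrable a b m n).const_mul _)).sub
    (fn_integrable a b m (n+1))).sub (fn_integrable a b (m+1) n)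

lemma fny_integrable (m n : ℕ) : Integrable (fny a b m n) := by
  rw [fny_eq]
  exact ((((((fn_integrable a b (m-1) n).const_mul _).sub
    ((fn_integrable a b m (n-1)).const_mul _)).add
    ((fn_integrable a b m n).const_mul _)).sub
    (fn_integrable a b m (n+1))).add (fn_integrable a b (m+1) n)).const_mul I

lemma fnx_slice (m n : ℕ) (y : ℝ) :
    Integrable (fun x : ℝ => fnx a b m n (x + y * I)) := by
  rw [fnx_eq]
  exact (((((fn_slice_x a b (m-1) n y).const_mul _).add
    ((fn_slice_x a b m (n-1) y).const_mul _)).add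
    ((fn_slice_x a b m n y).const_mul _)).sub
    (fn_slice_x a b m (n+1) y)).sub (fn_slice_x a b (m+1) n y)

lemma fny_slice (m n : ℕ) (x : ℝ) :
    Integrable (fun y : ℝ => fny a b m n (x + y * I)) := by
  rw [fny_eq]
  exact ((((((fn_slice_y a b (m-1) n x).const_mul _).sub
    ((fn_slice_y a b m (n-1) x).const_mul _)).add
    ((fn_slice_y a b m n x).const_mul _)).sub
    (fn_slice_y a b m (n+1) x)).add (fn_slice_y a b (m+1) n x)).const_mul I

lemma integral_fnx_zero (m n : ℕ) : ∫ w : ℂ, fnx a b m n w = 0 := by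
  rw [integral_complex_eq, MeasureTheory.Measure.volume_eq_prod]
  have hint : Integrable (fun p : ℝ × ℝ => fnx a b m n (p.1 + p.2 * I))
      ((volume : Measure ℝ).prod volume) := by
    rw [← MeasureTheory.Measure.volume_eq_prod]
    exact integrable_prod_of _ (fnx_integrable a b m n)
  rw [MeasureTheory.integral_prod _ hint]
  have hswap := MeasureTheory.integral_integral_swap
    (f := fun x y : ℝ => fnx a b m n (x + y * I)) hint
  rw [hswap]
  have h : ∀ y : ℝ, ∫ x : ℝ, fnx a b m n (x + y * I) = 0 := fun y =>
    integral_eq_zero_of_hasDerivAt_of_integrable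
      (fun x => hasDerivAt_fn_x a b m n y x) (fnx_slice a b m n y) (fn_slice_x a b m n y)
  simp only [h, integral_zero]

lemma integral_fny_zero (m n : ℕ) : ∫ w : ℂ, fny a b m n w = 0 := by
  rw [integral_complex_eq, MeasureTheory.Measure.volume_eq_prod]
  have hint : Integrable (fun p : ℝ × ℝ => fny a b m n (p.1 + p.2 * I))
      ((volume : Measure ℝ).prod volume) := by
    rw [← MeasureTheory.Measure.volume_eq_prod]
    exact integrable_prod_of _ (fny_integrable a b m n)
  rw [MeasureTheory.integral_prod _ hint]
  have h : ∀ x : ℝ, ∫ y : ℝ, fny a b m n (x + y * I) = 0 := fun x =>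
    integral_eq_zero_of_hasDerivAt_of_integrable
      (fun y => hasDerivAt_fn_y a b m n x y) (fny_slice a b m n x) (fn_slice_y a b m n x)
  simp only [h, integral_zero]

/-- The moments. -/
def J (m n : ℕ) : ℂ := ∫ w : ℂ, fn a b m n w

lemma J_Ex (m n : ℕ) :
    ↑m * J a b (m-1) n + ↑n * J a b m (n-1) + (a+b) * J a b m n
      - J a b m (n+1) - J a b (m+1) n = 0 := by
  have h0 := integral_fnx_zero a b m n
  rw [fnx_eq] at h0
  have i1 : Integrable (fun w : ℂ => (m:ℂ) * fn a b (m-1) n w) :=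
    (fn_integrable a b (m-1) n).const_mul _
  have i2 : Integrable (fun w : ℂ => (n:ℂ) * fn a b m (n-1) w) :=
    (fn_integrable a b m (n-1)).const_mul _
  have i3 : Integrable (fun w : ℂ => (a+b) * fn a b m n w) :=
    (fn_integrable a b m n).const_mul _
  have i12 : Integrable (fun w : ℂ => (m:ℂ) * fn a b (m-1) n w + (n:ℂ) * fn a b m (n-1) w) :=
    i1.add i2
  have i123 : Integrable (fun w : ℂ => (m:ℂ) * fn a b (m-1) n w + (n:ℂ) * fn a b m (n-1) w
      + (a+b) * fn a b m n w) := i12.add i3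
  have i4 : Integrable (fun w : ℂ => (m:ℂ) * fn a b (m-1) n w + (n:ℂ) * fn a b m (n-1) w
      + (a+b) * fn a b m n w - fn a b m (n+1) w) := i123.sub (fn_integrable a b m (n+1))
  rw [integral_sub i4 (fn_integrable a b (m+1) n), integral_sub i123 (fn_integrable a b m (n+1)),
      integral_add i12 i3, integral_add i1 i2,
      MeasureTheory.integral_const_mul, MeasureTheory.integral_const_mul,
      MeasureTheory.integral_const_mul] at h0
  exact h0

lemma J_Ey (m n : ℕ) :
    ↑m * J a b (m-1) n - ↑n * J a b m (n-1) + (a-b) * J a b m n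
      - J a b m (n+1) + J a b (m+1) n = 0 := by
  have h0 := integral_fny_zero a b m n
  rw [fny_eq] at h0
  rw [MeasureTheory.integral_const_mul] at h0
  rcases mul_eq_zero.1 h0 with h | h0
  · exact absurd h Complex.I_ne_zero
  have i1 : Integrable (fun w : ℂ => (m:ℂ) * fn a b (m-1) n w) :=
    (fn_integrable a b (m-1) n).const_mul _
  have i2 : Integrable (fun w : ℂ => (n:ℂ) * fn a b m (n-1) w) :=
    (fn_integrable a b m (n-1)).const_mul _
  have i3 : Integrable (fun w : ℂ => (a-b) * fn a b m n w) :=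
    (fn_integrable a b m n).const_mul _
  have i12 : Integrable (fun w : ℂ => (m:ℂ) * fn a b (m-1) n w - (n:ℂ) * fn a b m (n-1) w) :=
    i1.sub i2
  have i123 : Integrable (fun w : ℂ => (m:ℂ) * fn a b (m-1) n w - (n:ℂ) * fn a b m (n-1) w
      + (a-b) * fn a b m n w) := i12.add i3
  have i4 : Integrable (fun w : ℂ => (m:ℂ) * fn a b (m-1) n w - (n:ℂ) * fn a b m (n-1) w
      + (a-b) * fn a b m n w - fn a b m (n+1) w) := i123.sub (fn_integrable a b m (n+1))
  rw [integral_add i4 (fn_integrable a b (m+1) n), integral_sub i123 (fn_integrable a b m (n+1)),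
      integral_add i12 i3, integral_sub i1 i2,
      MeasureTheory.integral_const_mul, MeasureTheory.integral_const_mul,
      MeasureTheory.integral_const_mul] at h0
  exact h0

lemma J_R1 (m n : ℕ) :
    J a b m (n+1) = a * J a b m n + ↑m * J a b (m-1) n := by
  have hx := J_Ex a b m n
  have hy := J_Ey a b m n
  linear_combination (hx + hy) * (-1/2 : ℂ)

lemma J_R2 (m n : ℕ) :
    J a b (m+1) n = b * J a b m n + ↑n * J a b m (n-1) := by
  have hx := J_Ex a b m n
  have hy := J_Ey a b m n
  linear_combination (hx - hy) * (-1/2 : ℂ)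


lemma J_base : J a b 0 0 = ↑Real.pi * Complex.exp (a * b) := by
  have hpt : ∀ p : ℝ × ℝ, fn a b 0 0 (p.1 + p.2 * I) =
      Complex.exp ((-1) * (p.1:ℂ)^2 + (a+b) * (p.1:ℂ) + 0)
        * Complex.exp ((-1) * (p.2:ℂ)^2 + ((a-b)*I) * (p.2:ℂ) + 0) := by
    intro p
    rw [fn, conj_add_mul_I, ← Complex.exp_add]
    simp only [pow_zero, one_mul]
    congr 1
    linear_combination (p.2:ℂ)^2 * Complex.I_sq
  have hprod := MeasureTheory.integral_prod_mul (μ := (volume : Measure ℝ))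
    (ν := (volume : Measure ℝ))
    (f := fun x : ℝ => Complex.exp ((-1) * (x:ℂ)^2 + (a+b) * (x:ℂ) + 0))
    (g := fun y : ℝ => Complex.exp ((-1) * (y:ℂ)^2 + ((a-b)*I) * (y:ℂ) + 0))
  rw [J, integral_complex_eq, MeasureTheory.Measure.volume_eq_prod,
      MeasureTheory.integral_congr_ae (Filter.Eventually.of_forall hpt), hprod,
      integral_cexp_quadratic (by norm_num : (-1:ℂ).re < 0) (a+b) 0,
      integral_cexp_quadratic (by norm_num : (-1:ℂ).re < 0) ((a-b)*I) 0]
  have hdiv : ((Real.pi : ℂ) / -(-1) : ℂ) = (Real.pi : ℂ) := by norm_num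
  rw [hdiv, mul_mul_mul_comm, ← Complex.exp_add,
      ← Complex.cpow_add _ _ (by exact_mod_cast Real.pi_ne_zero)]
  norm_num
  congr 1
  linear_combination ((a-b)^2/4) * Complex.I_sq

lemma J_m_zero (m : ℕ) : J a b m 0 = ↑Real.pi * (Complex.exp (a * b) * b ^ m) := by
  induction m with
  | zero => simpa using J_base a b
  | succ k ih =>
      have h := J_R2 a b k 0
      rw [h, ih]
      simp only [Nat.cast_zero, zero_mul, add_zero]
      ring

/-- The derivative side. -/
def D (m n : ℕ) : ℂ := iteratedDeriv n (fun u : ℂ => Complex.exp (a * u) * u ^ m) b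

lemma contDiff_g (m : ℕ) : ContDiff ℂ ⊤ (fun u : ℂ => Complex.exp (a * u) * u ^ m) :=
  (Complex.contDiff_exp.comp (contDiff_const.mul contDiff_id)).mul (contDiff_id.pow m)

lemma iteratedDeriv_add' {f g : ℂ → ℂ} {n : ℕ} {x : ℂ}
    (hf : ContDiff ℂ ⊤ f) (hg : ContDiff ℂ ⊤ g) :
    iteratedDeriv n (fun u => f u + g u) x = iteratedDeriv n f x + iteratedDeriv n g x := by
  have h := iteratedDerivWithin_add (𝕜 := ℂ) (F := ℂ) (n := n) (s := Set.univ)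
    (Set.mem_univ x) uniqueDiffOn_univ
    ((hf.of_le le_top).contDiffWithinAt) ((hg.of_le le_top).contDiffWithinAt)
  simp only [iteratedDerivWithin_univ] at h
  exact h

lemma iteratedDeriv_const_mul' {f : ℂ → ℂ} {n : ℕ} {x : ℂ} (c : ℂ)
    (hf : ContDiff ℂ ⊤ f) :
    iteratedDeriv n (fun u => c * f u) x = c * iteratedDeriv n f x := by
  have h := iteratedDerivWithin_const_mul (𝕜 := ℂ) (n := n) (s := Set.univ)
    (Set.mem_univ x) uniqueDiffOn_univ c ((hf.of_le le_top).contDiffWithinAt)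
  simp only [iteratedDerivWithin_univ] at h
  exact h

lemma D_rec (m n : ℕ) : D a b m (n+1) = a * D a b m n + ↑m * D a b (m-1) n := by
  rw [D, iteratedDeriv_succ']
  have hderiv : deriv (fun u : ℂ => Complex.exp (a * u) * u ^ m)
      = fun u => a * (Complex.exp (a * u) * u ^ m)
          + ↑m * (Complex.exp (a * u) * u ^ (m-1)) := by
    funext u
    have ha : HasDerivAt (fun u : ℂ => Complex.exp (a * u)) (Complex.exp (a * u) * a) u := by
      simpa using ((hasDerivAt_id u).const_mul a).cexp
    have hb : HasDerivAt (fun u : ℂ => u ^ m) (↑m * u ^ (m-1)) u := by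
      simpa using (hasDerivAt_id u).fun_pow m
    have h1 := ha.fun_mul hb
    rw [h1.deriv]
    ring
  rw [hderiv,
      iteratedDeriv_add' (contDiff_const.mul (contDiff_g a m))
        (contDiff_const.mul (contDiff_g a (m-1))),
      iteratedDeriv_const_mul' a (contDiff_g a m),
      iteratedDeriv_const_mul' (↑m) (contDiff_g a (m-1))]
  rfl

lemma J_eq_D (n m : ℕ) : J a b m n = ↑Real.pi * D a b m n := by
  induction n generalizing m with
  | zero =>
      rw [J_m_zero, D, iteratedDeriv_zero]
  | succ k ih =>
      rw [J_R1, D_rec, ih m, ih (m-1)]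
      ring

lemma iteratedDeriv_finset_sum {ι : Type*} (s : Finset ι) {g : ι → ℂ → ℂ}
    (h : ∀ i ∈ s, ContDiff ℂ ⊤ (g i)) (n : ℕ) (x : ℂ) :
    iteratedDeriv n (fun u => ∑ i ∈ s, g i u) x = ∑ i ∈ s, iteratedDeriv n (g i) x := by
  classical
  induction s using Finset.induction_on with
  | empty =>
      simp only [Finset.sum_empty]
      have h0 := iteratedDeriv_const_mul' (n := n) (x := x) (0:ℂ)
        (contDiff_const (c := (0:ℂ)))
      simpa using h0
  | @insert i s' hi ih =>
      simp only [Finset.sum_insert hi]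
      rw [iteratedDeriv_add' (h i (Finset.mem_insert_self i s'))
          (ContDiff.sum fun j hj => h j (Finset.mem_insert_of_mem hj)),
          ih (fun j hj => h j (Finset.mem_insert_of_mem hj))]

end Stmt10

end Stmt10Aux

theorem stmt_10 (p : Polynomial ℂ) (a b : ℂ) (n : ℕ) :
    (Real.pi : ℂ)⁻¹ * ∫ w : ℂ, p.eval w * (conj w) ^ n *
        Complex.exp (a * w + b * conj w - (‖w‖ : ℂ) ^ 2) =
      iteratedDeriv n (fun u : ℂ => Complex.exp (a * u) * p.eval u) b := by
  classical
  have hπ : (Real.pi : ℂ) ≠ 0 := by exact_mod_cast Real.pi_ne_zero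
  have hnorm : ∀ w : ℂ, ((‖w‖ : ℂ)) ^ 2 = w * conj w := fun w => by
    rw [← Complex.ofReal_pow, Complex.sq_norm, Complex.mul_conj]
  have hL : (fun w : ℂ => p.eval w * (conj w) ^ n *
      Complex.exp (a * w + b * conj w - (‖w‖ : ℂ) ^ 2))
      = fun w => ∑ m ∈ Finset.range (p.natDegree + 1),
          p.coeff m * Stmt10.fn a b m n w := by
    funext w
    rw [hnorm w, Polynomial.eval_eq_sum_range, Finset.sum_mul, Finset.sum_mul]
    refine Finset.sum_congr rfl fun m _ => ?_
    rw [Stmt10.fn]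
    ring
  rw [hL, integral_finset_sum _ (fun m _ => (Stmt10.fn_integrable a b m n).const_mul _)]
  simp_rw [MeasureTheory.integral_const_mul]
  have hR : (fun u : ℂ => Complex.exp (a * u) * p.eval u)
      = fun u => ∑ m ∈ Finset.range (p.natDegree + 1),
          p.coeff m * (Complex.exp (a * u) * u ^ m) := by
    funext u
    rw [Polynomial.eval_eq_sum_range, Finset.mul_sum]
    refine Finset.sum_congr rfl fun m _ => ?_
    ring
  rw [hR, Stmt10.iteratedDeriv_finset_sum _
      (fun m _ => contDiff_const.mul (Stmt10.contDiff_g a m)) n b]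
  rw [Finset.mul_sum]
  refine Finset.sum_congr rfl fun m _ => ?_
  rw [Stmt10.iteratedDeriv_const_mul' (p.coeff m) (Stmt10.contDiff_g a m)]
  have hJ : ∫ w : ℂ, Stmt10.fn a b m n w = ↑Real.pi * Stmt10.D a b m n :=
    Stmt10.J_eq_D a b n m
  rw [hJ, Stmt10.D]
  field_simp
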